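/- Let A be a real symmetric n×n matrix, M a metric space, and h : ℝⁿ × M → ℝⁿ continuous and componentwise in x. Assume (A2): there is a > 0 with (hₖ(z₁,v) - hₖ(z₂,v))(z₁ - z₂) ≥ a|z₁ - z₂|² for all k, z₁, z₂ ∈ ℝ, v ∈ M. Assume also h(0,u) ≠ 0 for all u ∈ M. Then for every fixed u ∈ M and every λ > ‖A‖/a, the system A x = λ h(x,u) has a unique solution x ∈ ℝⁿ, and this solution is nontrivial (x ≠ 0). -/

import Mathlib

open scoped InnerProductSpace

theorem stmt2 (n : ℕ) (M : Type*) [MetricSpace M]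
    (A : Matrix (Fin n) (Fin n) ℝ) (hA : A.IsSymm)
    (hs : Fin n → ℝ → M → ℝ)
    (hcont : ∀ k, Continuous fun p : ℝ × M => hs k p.1 p.2)
    (h : EuclideanSpace ℝ (Fin n) → M → EuclideanSpace ℝ (Fin n))
    (hdef : ∀ x u k, h x u k = hs k (x k) u)
    (a : ℝ) (ha : 0 < a)
    (hmono : ∀ (k : Fin n) (z₁ z₂ : ℝ) (v : M),
      a * |z₁ - z₂| ^ 2 ≤ (hs k z₁ v - hs k z₂ v) * (z₁ - z₂))
    (h0 : ∀ u : M, h 0 u ≠ 0)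
    (u : M) (lam : ℝ) (hlam : ‖Matrix.toEuclideanCLM (𝕜 := ℝ) A‖ / a < lam) :
    (∃! x : EuclideanSpace ℝ (Fin n),
        Matrix.toEuclideanCLM (𝕜 := ℝ) A x = lam • h x u)
    ∧ ∀ x : EuclideanSpace ℝ (Fin n),
        Matrix.toEuclideanCLM (𝕜 := ℝ) A x = lam • h x u → x ≠ 0 := by
  classical
  set B := Matrix.toEuclideanCLM (𝕜 := ℝ) A with hBdef
  have hlam0 : 0 < lam := lt_of_le_of_lt (div_nonneg (norm_nonneg _) ha.le) hlam
  -- injectivity of each component map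
  have hinj : ∀ k (z₁ z₂ : ℝ), hs k z₁ u = hs k z₂ u → z₁ = z₂ := by
    intro k z₁ z₂ hz
    by_contra hne
    have h1 := hmono k z₁ z₂ u
    rw [hz, sub_self, zero_mul] at h1
    have h2 : 0 < |z₁ - z₂| := abs_pos.mpr (sub_ne_zero.mpr hne)
    have h3 := mul_pos ha (pow_pos h2 2)
    linarith
  -- surjectivity of each component map
  have hsurj : ∀ k (y : ℝ), ∃ z, hs k z u = y := by
    intro k y
    set c := hs k 0 u with hc
    set R := (|y - c| + 1) / a with hR
    have hRpos : 0 < R := by positivity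
    have haR : a * R = |y - c| + 1 := by
      rw [hR]; field_simp
    have hub : y ≤ hs k R u := by
      have h1 := hmono k R 0 u
      rw [sub_zero, abs_of_pos hRpos] at h1
      nlinarith [le_abs_self (y - c)]
    have hlb : hs k (-R) u ≤ y := by
      have h1 := hmono k (-R) 0 u
      rw [sub_zero, abs_neg, abs_of_pos hRpos] at h1
      nlinarith [neg_abs_le (y - c)]
    have hco : ContinuousOn (fun z => hs k z u) (Set.Icc (-R) R) :=
      ((hcont k).comp (continuous_id.prodMk continuous_const)).continuousOn
    obtain ⟨z, _, hz⟩ := intermediate_value_Icc (by linarith : -R ≤ R) hco ⟨hlb, hub⟩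
    exact ⟨z, hz⟩
  choose φ hφ using hsurj
  have hφinv : ∀ k z, φ k (hs k z u) = z := fun k z => hinj k _ _ (hφ k _)
  have hφlip : ∀ k (y₁ y₂ : ℝ), a * |φ k y₁ - φ k y₂| ≤ |y₁ - y₂| := by
    intro k y₁ y₂
    have h1 := hmono k (φ k y₁) (φ k y₂) u
    rw [hφ, hφ] at h1
    rcases eq_or_lt_of_le (abs_nonneg (φ k y₁ - φ k y₂)) with hd | hd
    · rw [← hd, mul_zero]; exact abs_nonneg _
    · have h2 : (y₁ - y₂) * (φ k y₁ - φ k y₂) ≤ |y₁ - y₂| * |φ k y₁ - φ k y₂| := by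
        rw [← abs_mul]; exact le_abs_self _
      have h3 : a * |φ k y₁ - φ k y₂| ^ 2 ≤ |y₁ - y₂| * |φ k y₁ - φ k y₂| := le_trans h1 h2
      nlinarith
  -- the contraction map
  set T : EuclideanSpace ℝ (Fin n) → EuclideanSpace ℝ (Fin n) :=
    fun x => WithLp.toLp 2 (fun k => φ k (lam⁻¹ * B x k)) with hT
  have hTapp : ∀ (x : EuclideanSpace ℝ (Fin n)) k, T x k = φ k (lam⁻¹ * B x k) :=
    fun x k => rfl
  -- fixed points correspond to solutions
  have hfix : ∀ x : EuclideanSpace ℝ (Fin n), T x = x ↔ B x = lam • h x u := by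
    intro x
    constructor
    · intro hx
      ext k
      have hk : φ k (lam⁻¹ * B x k) = x k := congrArg (fun v : EuclideanSpace ℝ (Fin n) => v k) hx
      have hk2 : hs k (φ k (lam⁻¹ * B x k)) u = hs k (x k) u := by rw [hk]
      rw [hφ] at hk2
      have : (lam • h x u) k = lam * hs k (x k) u := by
        simp [PiLp.smul_apply, smul_eq_mul, hdef]
      rw [this, ← hk2]
      field_simp
    · intro hx
      ext k
      have hk : B x k = lam * hs k (x k) u := by
        rw [hx]; simp [PiLp.smul_apply, smul_eq_mul, hdef]
      have : lam⁻¹ * B x k = hs k (x k) u := by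
        rw [hk]; field_simp
      rw [hTapp, this, hφinv]
  -- Lipschitz estimate
  set K : ℝ := ‖B‖ / (a * lam) with hKdef
  have hKnn : 0 ≤ K := by positivity
  have hK1 : K < 1 := by
    rw [hKdef, div_lt_one (by positivity)]
    have := (div_lt_iff₀ ha).mp hlam
    nlinarith
  have hcomp : ∀ (x y : EuclideanSpace ℝ (Fin n)) k,
      dist (T x k) (T y k) ≤ (a * lam)⁻¹ * dist (B x k) (B y k) := by
    intro x y k
    have h1 := hφlip k (lam⁻¹ * B x k) (lam⁻¹ * B y k)
    have habs : |lam⁻¹ * B x k - lam⁻¹ * B y k| = lam⁻¹ * |B x k - B y k| := by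
      rw [← mul_sub, abs_mul, abs_of_pos (inv_pos.mpr hlam0)]
    rw [habs] at h1
    rw [hTapp, hTapp, Real.dist_eq, Real.dist_eq]
    rw [show (a * lam)⁻¹ * |B x k - B y k| = (lam⁻¹ * |B x k - B y k|) / a by
      rw [mul_inv, div_eq_mul_inv]; ring]
    rw [le_div_iff₀ ha]
    linarith [h1]
  have hTd : ∀ x y : EuclideanSpace ℝ (Fin n), dist (T x) (T y) ≤ K * dist x y := by
    intro x y
    have hstep : dist (T x) (T y) ≤ (a * lam)⁻¹ * dist (B x) (B y) := by
      rw [EuclideanSpace.dist_eq, EuclideanSpace.dist_eq]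
      have h1 : ∑ k, dist (T x k) (T y k) ^ 2
          ≤ ∑ k, ((a * lam)⁻¹ * dist (B x k) (B y k)) ^ 2 := by
        apply Finset.sum_le_sum
        intro k _
        exact pow_le_pow_left₀ dist_nonneg (hcomp x y k) 2
      have h2 : ∑ k, ((a * lam)⁻¹ * dist (B x k) (B y k)) ^ 2
          = ((a * lam)⁻¹) ^ 2 * ∑ k, dist (B x k) (B y k) ^ 2 := by
        rw [Finset.mul_sum]
        exact Finset.sum_congr rfl fun k _ => by ring
      calc Real.sqrt (∑ k, dist (T x k) (T y k) ^ 2)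
          ≤ Real.sqrt (((a * lam)⁻¹) ^ 2 * ∑ k, dist (B x k) (B y k) ^ 2) := by
            apply Real.sqrt_le_sqrt; rw [← h2]; exact h1
        _ = (a * lam)⁻¹ * Real.sqrt (∑ k, dist (B x k) (B y k) ^ 2) := by
            rw [Real.sqrt_mul (sq_nonneg _), Real.sqrt_sq (by positivity)]
    have hstep2 : dist (B x) (B y) ≤ ‖B‖ * dist x y := by
      have := B.lipschitz.dist_le_mul x y
      rwa [coe_nnnorm] at this
    calc dist (T x) (T y) ≤ (a * lam)⁻¹ * dist (B x) (B y) := hstep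
      _ ≤ (a * lam)⁻¹ * (‖B‖ * dist x y) := by
          exact mul_le_mul_of_nonneg_left hstep2
            (le_of_lt (inv_pos.mpr (mul_pos ha hlam0)))
      _ = K * dist x y := by rw [hKdef, div_eq_mul_inv]; ring
  -- contraction
  set K' : NNReal := ⟨K, hKnn⟩ with hK'
  have hC : ContractingWith K' T := by
    constructor
    · exact_mod_cast hK1
    · exact LipschitzWith.of_dist_le_mul hTd
  have hfp : T (hC.fixedPoint T) = hC.fixedPoint T := hC.fixedPoint_isFixedPt
  have huniq : ∀ x y : EuclideanSpace ℝ (Fin n), T x = x → T y = y → x = y := by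
    intro x y hx hy
    by_contra hne
    have hd : 0 < dist x y := dist_pos.mpr hne
    have := hTd x y
    rw [hx, hy] at this
    nlinarith
  constructor
  · exact ⟨hC.fixedPoint T, (hfix _).mp hfp,
      fun y hy => huniq y _ ((hfix y).mpr hy) hfp⟩
  · intro x hx hx0
    rw [hx0] at hx
    rw [map_zero] at hx
    rcases (smul_eq_zero.mp hx.symm) with h1 | h1
    · exact hlam0.ne' h1
    · exact h0 u h1
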